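/- Let M_n⁰(ℂ) denote the space of n×n complex matrices with zero diagonal. There exists g ∈ GL_n(ℂ) such that M_n⁰(ℂ) + g·M_n⁰(ℂ)·g⁻¹ = sl_n(ℂ). Concretely, one may take g = ∏_{i=1}^{n−1}(I + E_{i,i+1}), i.e., the matrix with entries g_{ij} = 1 if i ≤ j and 0 otherwise. -/
import Mathlib



/-- The Lie algebra `sl_n(ℂ)` of traceless matrices. -/
noncomputable def sln (n : ℕ) : Submodule ℂ (Matrix (Fin n) (Fin n) ℂ) :=
  LinearMap.ker (Matrix.traceLinearMap (Fin n) ℂ ℂ)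

/-- The subspace `M_n⁰(ℂ)` of matrices with zero diagonal. -/
noncomputable def zeroDiag (n : ℕ) : Submodule ℂ (Matrix (Fin n) (Fin n) ℂ) where
  carrier := {x | ∀ i : Fin n, x i i = 0}
  add_mem' := by intro a b ha hb i; simp [Matrix.add_apply, ha i, hb i]
  zero_mem' := by intro i; simp
  smul_mem' := by intro c a ha i; simp [Matrix.smul_apply, ha i]

/-- Conjugation by `g ∈ GL_n(ℂ)` as a linear map `x ↦ g x g⁻¹`. -/
noncomputable def glConj {n : ℕ} (g : GL (Fin n) ℂ) :
    Matrix (Fin n) (Fin n) ℂ →ₗ[ℂ] Matrix (Fin n) (Fin n) ℂ where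
  toFun x := (g : Matrix (Fin n) (Fin n) ℂ) * x * ((g⁻¹ : GL (Fin n) ℂ) : Matrix (Fin n) (Fin n) ℂ)
  map_add' x y := by simp [Matrix.mul_add, Matrix.add_mul]
  map_smul' c x := by simp [Matrix.mul_smul, Matrix.smul_mul]

open Matrix Finset


namespace St11

variable {n : ℕ}

noncomputable def G (n : ℕ) : Matrix (Fin n) (Fin n) ℂ :=
  fun i j => if (i:ℕ) ≤ (j:ℕ) then 1 else 0

noncomputable def Gi (n : ℕ) : Matrix (Fin n) (Fin n) ℂ :=
  fun i j => (if (j:ℕ) = (i:ℕ) then 1 else 0) + (if (j:ℕ) = (i:ℕ)+1 then -1 else 0)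

lemma sumA (f : Fin n → ℂ) (m : ℕ) :
    ∑ j : Fin n, (if (j:ℕ) = m then f j else 0) = if h : m < n then f ⟨m, h⟩ else 0 := by
  by_cases h : m < n
  · rw [dif_pos h, Finset.sum_eq_single (⟨m, h⟩ : Fin n)]
    · simp
    · intro b _ hb; rw [if_neg]; intro hc; exact hb (Fin.ext hc)
    · simp
  · rw [dif_neg h]
    refine Finset.sum_eq_zero fun b _ => if_neg (fun hc => h ?_)
    rw [← hc]; exact b.isLt

lemma GGi : G n * Gi n = 1 := by
  ext i j
  rw [Matrix.mul_apply]
  have key : ∀ k : Fin n, G n i k * Gi n k j =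
      (if (k:ℕ) = (j:ℕ) then (if (i:ℕ) ≤ (j:ℕ) then (1:ℂ) else 0) else 0)
      + (if (k:ℕ) = (j:ℕ) - 1 then (if (i:ℕ) ≤ (j:ℕ) - 1 ∧ 1 ≤ (j:ℕ) then (-1:ℂ) else 0) else 0) := by
    intro k
    simp only [G, Gi]
    split_ifs <;> (try norm_num) <;> omega
  rw [Finset.sum_congr rfl (fun k _ => key k), Finset.sum_add_distrib, sumA, sumA,
    dif_pos j.isLt, dif_pos (lt_of_le_of_lt (Nat.sub_le (j:ℕ) 1) j.isLt), Matrix.one_apply]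
  by_cases hij : (i:ℕ) = (j:ℕ)
  · rw [if_pos (Fin.ext hij)]
    split_ifs <;> (try norm_num) <;> omega
  · rw [if_neg (fun h => hij (congrArg Fin.val h))]
    split_ifs <;> (try norm_num) <;> omega

lemma GiG : Gi n * G n = 1 := by
  ext i j
  rw [Matrix.mul_apply]
  have key : ∀ k : Fin n, Gi n i k * G n k j =
      (if (k:ℕ) = (i:ℕ) then (if (i:ℕ) ≤ (j:ℕ) then (1:ℂ) else 0) else 0)
      + (if (k:ℕ) = (i:ℕ)+1 then (if (i:ℕ)+1 ≤ (j:ℕ) then (-1:ℂ) else 0) else 0) := by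
    intro k
    simp only [G, Gi]
    split_ifs <;> (try norm_num) <;> omega
  rw [Finset.sum_congr rfl (fun k _ => key k), Finset.sum_add_distrib, sumA, sumA,
    dif_pos i.isLt, Matrix.one_apply]
  have hj := j.isLt
  by_cases h : (i:ℕ)+1 < n
  · rw [dif_pos h]
    by_cases hij : (i:ℕ) = (j:ℕ)
    · rw [if_pos (Fin.ext hij)]
      split_ifs <;> (try norm_num) <;> omega
    · rw [if_neg (fun h' => hij (congrArg Fin.val h'))]
      split_ifs <;> (try norm_num) <;> omega
  · rw [dif_neg h]
    by_cases hij : (i:ℕ) = (j:ℕ)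
    · rw [if_pos (Fin.ext hij)]
      split_ifs <;> (try norm_num) <;> omega
    · rw [if_neg (fun h' => hij (congrArg Fin.val h'))]
      split_ifs <;> (try norm_num) <;> omega

end St11

namespace St11

noncomputable def gU (n : ℕ) : GL (Fin n) ℂ := ⟨G n, Gi n, GGi, GiG⟩

noncomputable def dd (x : Matrix (Fin n) (Fin n) ℂ) : ℕ → ℂ :=
  fun k => if h : k < n then x ⟨k, h⟩ ⟨k, h⟩ else 0

noncomputable def cc (x : Matrix (Fin n) (Fin n) ℂ) : ℕ → ℂ :=
  fun k => ∑ j ∈ Finset.range (k+1), dd x j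

noncomputable def zz (x : Matrix (Fin n) (Fin n) ℂ) : Matrix (Fin n) (Fin n) ℂ :=
  fun i j => if (i:ℕ) = (j:ℕ)+1 then cc x j else 0

lemma Gz (x : Matrix (Fin n) (Fin n) ℂ) (i k : Fin n) :
    (G n * zz x) i k = if (i:ℕ) ≤ (k:ℕ)+1 ∧ (k:ℕ)+1 < n then cc x k else 0 := by
  rw [Matrix.mul_apply]
  have key : ∀ j : Fin n, G n i j * zz x j k =
      if (j:ℕ) = (k:ℕ)+1 then (if (i:ℕ) ≤ (k:ℕ)+1 then cc x k else 0) else 0 := by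
    intro j
    simp only [G, zz]
    split_ifs <;> first | ring1 | (exfalso; omega)
  rw [Finset.sum_congr rfl (fun j _ => key j), sumA]
  split_ifs <;> first | rfl | (exfalso; omega)

lemma diag_key (x : Matrix (Fin n) (Fin n) ℂ) (htr : ∑ j : Fin n, x j j = 0) (i : Fin n) :
    (G n * zz x * Gi n) i i = x i i := by
  rw [Matrix.mul_apply]
  have key : ∀ k : Fin n, (G n * zz x) i k * Gi n k i =
      (if (k:ℕ) = (i:ℕ) then (G n * zz x) i k else 0)
      + (if (k:ℕ) = (i:ℕ) - 1 then (if 1 ≤ (i:ℕ) then -((G n * zz x) i k) else 0) else 0) := by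
    intro k
    simp only [Gi]
    split_ifs <;> first | ring1 | (exfalso; omega)
  rw [Finset.sum_congr rfl (fun k _ => key k), Finset.sum_add_distrib, sumA, sumA,
    dif_pos i.isLt, dif_pos (lt_of_le_of_lt (Nat.sub_le (i:ℕ) 1) i.isLt)]
  have hcn : ∀ m : ℕ, m + 1 = n → cc x m = 0 := by
    intro m hm
    have h2 : cc x m = ∑ j : Fin n, x j j := by
      simp only [cc, hm]
      rw [← Fin.sum_univ_eq_sum_range (dd x) n]
      refine Finset.sum_congr rfl fun j _ => ?_
      simp [dd, j.isLt]
    rw [h2, htr]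
  have hdi : dd x (i:ℕ) = x i i := by
    rw [dd, dif_pos i.isLt]
  rw [Gz, Gz]
  simp only [Fin.eta]
  have hi := i.isLt
  by_cases h0 : 1 ≤ (i:ℕ)
  · have hsub : (i:ℕ) - 1 + 1 = (i:ℕ) := by omega
    have hcsum : cc x (i:ℕ) = cc x ((i:ℕ)-1) + dd x (i:ℕ) := by
      simp only [cc]
      rw [show (i:ℕ)+1 = ((i:ℕ)-1+1)+1 by omega, Finset.sum_range_succ]
      congr 1
      rw [hsub]
    rw [if_pos h0,
      if_pos (show (i:ℕ) ≤ (i:ℕ)-1+1 ∧ (i:ℕ)-1+1 < n by omega)]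
    by_cases h1 : (i:ℕ)+1 < n
    · rw [if_pos (show (i:ℕ) ≤ (i:ℕ)+1 ∧ (i:ℕ)+1 < n by omega), ← hdi, hcsum]
      ring
    · have hn : (i:ℕ)+1 = n := by omega
      rw [if_neg (by omega)]
      have h3 := hcn (i:ℕ) hn
      rw [hcsum] at h3
      rw [← hdi]
      linear_combination -h3
  · have hi0 : (i:ℕ) = 0 := by omega
    by_cases h1 : (i:ℕ)+1 < n
    · rw [if_pos (show (i:ℕ) ≤ (i:ℕ)+1 ∧ (i:ℕ)+1 < n by omega), if_neg h0]
      rw [← hdi, cc, hi0]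
      simp
    · have hn : (i:ℕ)+1 = n := by omega
      rw [if_neg (show ¬((i:ℕ) ≤ (i:ℕ)+1 ∧ (i:ℕ)+1 < n) by omega), if_neg h0]
      have h2 := hcn (i:ℕ) hn
      rw [cc, hi0] at h2
      simp at h2
      rw [← hdi, hi0, h2]
      ring

end St11

theorem stmt_11 (n : ℕ) :
    ∃ g : GL (Fin n) ℂ,
      zeroDiag n ⊔ Submodule.map (glConj g) (zeroDiag n) = sln n := by
  refine ⟨St11.gU n, le_antisymm (sup_le ?_ ?_) ?_⟩
  · intro y hy
    simp only [sln, LinearMap.mem_ker, Matrix.traceLinearMap_apply, Matrix.trace, Matrix.diag]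
    exact Finset.sum_eq_zero fun i _ => hy i
  · rintro _ ⟨y, hy, rfl⟩
    simp only [sln, LinearMap.mem_ker, Matrix.traceLinearMap_apply]
    have h1 : glConj (St11.gU n) y =
        ((St11.gU n : GL (Fin n) ℂ) : Matrix (Fin n) (Fin n) ℂ) * y *
          (((St11.gU n)⁻¹ : GL (Fin n) ℂ) : Matrix (Fin n) (Fin n) ℂ) := rfl
    rw [h1, Matrix.trace_units_conj]
    simpa [Matrix.trace, Matrix.diag] using Finset.sum_eq_zero fun i _ => hy i
  · intro x hx
    have htr : ∑ j : Fin n, x j j = 0 := by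
      simpa [sln, Matrix.trace, Matrix.diag] using hx
    have hzd : x - St11.G n * St11.zz x * St11.Gi n ∈ zeroDiag n := by
      intro i
      rw [Matrix.sub_apply, St11.diag_key x htr i, sub_self]
    have hz : St11.zz x ∈ zeroDiag n := by
      intro i
      simp [St11.zz]
    have hwmem : St11.G n * St11.zz x * St11.Gi n ∈
        Submodule.map (glConj (St11.gU n)) (zeroDiag n) := ⟨St11.zz x, hz, rfl⟩
    exact Submodule.mem_sup.mpr ⟨_, hzd, _, hwmem, sub_add_cancel x _⟩
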